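/- Let T be a subgraph of a finite simple graph G, let (L,M) be a correspondence assignment for G, and suppose G is T-critical with respect to (L,M). Let (A,B) be a separation of G (i.e., A ∪ B = G and there are no edges of G between V(A) \ V(B) and V(B) \ V(A)) such that T ⊆ A and B is not contained in A. Then the induced subgraph G[V(B)] is A[V(A) ∩ V(B)]-critical with respect to (L,M). -/
import Mathlib


/-- A partial matching: each first coordinate and each second coordinate
occurs in at most one pair. -/
def PartialMatching {α β : Type*} (S : Finset (α × β)) : Prop :=
  ∀ p ∈ S, ∀ q ∈ S, (p.1 = q.1 → p = q) ∧ (p.2 = q.2 → p = q)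

/-- `(L, M)` is a correspondence assignment for `G`: for each edge `uv`,
`M u v` is a partial matching between `L u` and `L v`, symmetric in `u, v`. -/
def GoodCorr {V : Type*} (G : SimpleGraph V) (L : V → Finset ℕ)
    (M : V → V → Finset (ℕ × ℕ)) : Prop :=
  (∀ u v, ∀ p ∈ M u v, G.Adj u v ∧ p.1 ∈ L u ∧ p.2 ∈ L v) ∧
  (∀ u v, PartialMatching (M u v)) ∧
  (∀ u v c d, (c, d) ∈ M u v ↔ (d, c) ∈ M v u)

/-- An `(L, M)`-colouring of `G`. -/
def CorrColouring {V : Type*} (G : SimpleGraph V) (L : V → Finset ℕ)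
    (M : V → V → Finset (ℕ × ℕ)) (φ : V → ℕ) : Prop :=
  (∀ v, φ v ∈ L v) ∧ ∀ u v, G.Adj u v → (φ u, φ v) ∉ M u v

/-- An `(L, M)`-colouring of the subgraph `H` of `G`. -/
def ColouringOn {V : Type*} {G : SimpleGraph V} (L : V → Finset ℕ)
    (M : V → V → Finset (ℕ × ℕ)) (H : G.Subgraph) (φ : V → ℕ) : Prop :=
  (∀ v ∈ H.verts, φ v ∈ L v) ∧ ∀ u v, H.Adj u v → (φ u, φ v) ∉ M u v

/-- The colouring `φ` of `S` extends to an `(L, M)`-colouring of `H`. -/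
def ExtendsTo {V : Type*} {G : SimpleGraph V} (L : V → Finset ℕ)
    (M : V → V → Finset (ℕ × ℕ)) (S H : G.Subgraph) (φ : V → ℕ) : Prop :=
  ∃ ψ : V → ℕ, ColouringOn L M H ψ ∧ ∀ v ∈ S.verts, ψ v = φ v

/-- `H` is `S`-critical with respect to `(L, M)`: `H ≠ S` and every proper
subgraph of `H` containing `S` admits a colouring of `S` that extends to it
but not to `H`. -/
def SCritical {V : Type*} {G : SimpleGraph V} (L : V → Finset ℕ)
    (M : V → V → Finset (ℕ × ℕ)) (S H : G.Subgraph) : Prop :=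
  S ≠ H ∧ ∀ H' : G.Subgraph, S ≤ H' → H' < H →
    ∃ φ : V → ℕ, ColouringOn L M S φ ∧ ExtendsTo L M S H' φ ∧ ¬ ExtendsTo L M S H φ

/-- `G` is `(L, M)`-critical: `G` itself has no `(L, M)`-colouring, but every
proper subgraph of `G` has one. -/
def CorrCritical {V : Type*} (G : SimpleGraph V) (L : V → Finset ℕ)
    (M : V → V → Finset (ℕ × ℕ)) : Prop :=
  (¬ ∃ φ, CorrColouring G L M φ) ∧
  ∀ H : G.Subgraph, H ≠ ⊤ → ∃ φ, ColouringOn L M H φ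

lemma colouringOn_mono {V : Type*} {G : SimpleGraph V} (L : V → Finset ℕ)
    (M : V → V → Finset (ℕ × ℕ)) {H1 H2 : G.Subgraph} (h : H1 ≤ H2)
    {φ : V → ℕ} (hφ : ColouringOn L M H2 φ) : ColouringOn L M H1 φ :=
  ⟨fun v hv => hφ.1 v (h.1 hv), fun u v huv => hφ.2 u v (h.2 huv)⟩

theorem stmt10 {V : Type*} [Fintype V] (G : SimpleGraph V)
    (L : V → Finset ℕ) (M : V → V → Finset (ℕ × ℕ)) (hG : GoodCorr G L M)
    (T A B : G.Subgraph)
    (hcrit : SCritical L M T ⊤)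
    (hunion : A ⊔ B = ⊤)
    (hsep : ∀ u v : V, G.Adj u v → u ∈ A.verts → u ∉ B.verts →
      v ∈ B.verts → v ∈ A.verts)
    (hTA : T ≤ A) (hBA : ¬ B ≤ A) :
    SCritical L M (A.induce (A.verts ∩ B.verts))
      ((⊤ : G.Subgraph).induce B.verts) := by
  classical
  set S' := A.induce (A.verts ∩ B.verts) with hS'def
  set H0 := (⊤ : G.Subgraph).induce B.verts with hH0def
  have hS'A : S' ≤ A :=
    ⟨fun v hv => hv.1, fun u v h => h.2.2⟩
  have hBH0 : B ≤ H0 :=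
    ⟨fun v hv => hv, fun u v h => ⟨B.edge_vert h, B.edge_vert h.symm, B.adj_sub h⟩⟩
  have hVuniv : ∀ v : V, v ∈ A.verts ∪ B.verts := by
    intro v
    have : (A ⊔ B).verts = (⊤ : G.Subgraph).verts := by rw [hunion]
    simp only [SimpleGraph.Subgraph.verts_sup, SimpleGraph.Subgraph.verts_top] at this
    rw [this]; trivial
  constructor
  · intro h
    exact hBA (le_trans hBH0 (le_trans (le_of_eq h.symm) hS'A))
  · intro H' hSH' hH'
    set W := A ⊔ H' with hWdef
    have hTW : T ≤ W := le_trans hTA le_sup_left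
    have hWne : W ≠ ⊤ := by
      intro hW
      apply hH'.not_ge
      constructor
      · intro v hv
        by_cases hvA : v ∈ A.verts
        · exact hSH'.1 ⟨hvA, hv⟩
        · have hvW : v ∈ W.verts := by rw [hW]; trivial
          rcases hvW with h | h
          · exact absurd h hvA
          · exact h
      · intro u v huv
        have hadj : W.Adj u v := by
          rw [hW]
          simpa using huv.2.2
        rcases hadj with h | h
        · exact hSH'.2 ⟨⟨A.edge_vert h, huv.1⟩, ⟨A.edge_vert h.symm, huv.2.1⟩, h⟩
        · exact h
    obtain ⟨φ, hφT, ⟨ψ, hψW, hψφ⟩, hnotext⟩ :=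
      hcrit.2 W hTW (lt_top_iff_ne_top.mpr hWne)
    refine ⟨ψ, colouringOn_mono L M (le_trans hS'A le_sup_left) hψW,
      ⟨ψ, colouringOn_mono L M le_sup_right hψW, fun v _ => rfl⟩, ?_⟩
    rintro ⟨σ, hσ, hσψ⟩
    apply hnotext
    -- helper: σ and ψ agree on A ∩ B
    have hagree : ∀ v, v ∈ A.verts → v ∈ B.verts → σ v = ψ v := by
      intro v hvA hvB
      exact hσψ v ⟨hvA, hvB⟩
    -- helper: edges leaving B \ A stay in B
    have hedge : ∀ u v, G.Adj u v → u ∈ B.verts → u ∉ A.verts → v ∈ B.verts := by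
      intro u v hadj huB huA
      by_contra hvB
      have hvA : v ∈ A.verts := (hVuniv v).resolve_right hvB
      exact huA (hsep v u hadj.symm hvA hvB huB)
    refine ⟨fun v => if v ∈ B.verts ∧ v ∉ A.verts then σ v else ψ v, ⟨?_, ?_⟩, ?_⟩
    · intro v _
      by_cases h : v ∈ B.verts ∧ v ∉ A.verts
      · simp only [if_pos h]
        exact hσ.1 v h.1
      · simp only [if_neg h]
        have hvA : v ∈ A.verts := by
          by_cases hvB : v ∈ B.verts
          · by_contra hvA; exact h ⟨hvB, hvA⟩
          · exact (hVuniv v).resolve_right hvB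
        exact hψW.1 v (Or.inl hvA)
    · intro u v huv
      have hadj : G.Adj u v := by simpa using huv
      by_cases hu : u ∈ B.verts ∧ u ∉ A.verts <;>
        by_cases hv : v ∈ B.verts ∧ v ∉ A.verts
      · simp only [if_pos hu, if_pos hv]
        exact hσ.2 u v ⟨hu.1, hv.1, by simpa using hadj⟩
      · -- u in B \ A, v in A
        have hvB : v ∈ B.verts := hedge u v hadj hu.1 hu.2
        have hvA : v ∈ A.verts := by by_contra hvA; exact hv ⟨hvB, hvA⟩
        simp only [if_pos hu, if_neg hv]
        rw [← hagree v hvA hvB]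
        exact hσ.2 u v ⟨hu.1, hvB, by simpa using hadj⟩
      · -- v in B \ A, u in A
        have huB : u ∈ B.verts := hedge v u hadj.symm hv.1 hv.2
        have huA : u ∈ A.verts := by by_contra huA; exact hu ⟨huB, huA⟩
        simp only [if_neg hu, if_pos hv]
        rw [← hagree u huA huB]
        exact hσ.2 u v ⟨huB, hv.1, by simpa using hadj⟩
      · -- both in A
        have huA : u ∈ A.verts := by
          by_cases huB : u ∈ B.verts
          · by_contra huA; exact hu ⟨huB, huA⟩
          · exact (hVuniv u).resolve_right huB
        have hvA : v ∈ A.verts := by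
          by_cases hvB : v ∈ B.verts
          · by_contra hvA; exact hv ⟨hvB, hvA⟩
          · exact (hVuniv v).resolve_right hvB
        simp only [if_neg hu, if_neg hv]
        have : (A ⊔ B).Adj u v := by rw [hunion]; simpa using hadj
        rcases this with h | h
        · exact hψW.2 u v (Or.inl h)
        · have huB : u ∈ B.verts := B.edge_vert h
          have hvB : v ∈ B.verts := B.edge_vert h.symm
          rw [← hagree u huA huB, ← hagree v hvA hvB]
          exact hσ.2 u v ⟨huB, hvB, by simpa using hadj⟩
    · intro v hvT
      have hvA : v ∈ A.verts := hTA.1 hvT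
      have : ¬ (v ∈ B.verts ∧ v ∉ A.verts) := fun h => h.2 hvA
      simp only [if_neg this]
      exact hψφ v hvT
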